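/- The bracket [f₁ g₁ + ω₁, f₂ g₂ + ω₂] = f₁f₂[g₁,g₂] + (g₁|g₂) f₂ d(f₁) on (R ⊗ ġ) ⊕ K (with K central) satisfies the Jacobi identity, using invariance of the form (·|·) on ġ. -/

import Mathlib

open Finsupp TensorProduct

/-- The Laurent polynomial ring `R = ℂ[t₀^{±1},…,t_N^{±1}]`. -/
abbrev Rring (N : ℕ) := (Fin (N + 1) → ℤ) →₀ ℂ

/-- The product of Laurent polynomials. -/
noncomputable def rmul (N : ℕ) (f g : Rring N) : Rring N :=
  f.sum fun s c => g.sum fun s' c' => Finsupp.single (s + s') (c * c')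

/-- The space of 1-forms `Ω_R`. -/
abbrev Omega (N : ℕ) := (Fin (N + 1) → ℤ) →₀ (Fin (N + 1) → ℂ)

/-- The differential `d : R → Ω_R`. -/
noncomputable def dR (N : ℕ) (f : Rring N) : Omega N :=
  f.sum fun s c => Finsupp.single s (c • fun p => (s p : ℂ))

/-- The `R`-module structure on `Ω_R`. -/
noncomputable def rsmul (N : ℕ) (f : Rring N) (ω : Omega N) : Omega N :=
  f.sum fun s c => ω.sum fun s' v => Finsupp.single (s + s') (c • v)

/-- The subspace `d(R)` of exact forms. -/
noncomputable def exactSub (N : ℕ) : Submodule ℂ (Omega N) :=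
  Submodule.span ℂ (Set.range (dR N))


section Aux

variable {N : ℕ}

lemma rmul_single_single (s s' : Fin (N + 1) → ℤ) (c c' : ℂ) :
    rmul N (Finsupp.single s c) (Finsupp.single s' c') = Finsupp.single (s + s') (c * c') := by
  simp [rmul, Finsupp.sum_single_index]

lemma rmul_zero_left (f : Rring N) : rmul N 0 f = 0 := by simp [rmul]

lemma rmul_zero_right (f : Rring N) : rmul N f 0 = 0 := by simp [rmul]

lemma rmul_add_left (f f' g : Rring N) :
    rmul N (f + f') g = rmul N f g + rmul N f' g := by
  unfold rmul
  apply Finsupp.sum_add_index <;> intros <;> simp [Finsupp.sum_add, add_mul,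
    Finsupp.sum_add_index, Finsupp.single_add]

lemma rmul_add_right (f g g' : Rring N) :
    rmul N f (g + g') = rmul N f g + rmul N f g' := by
  unfold rmul
  rw [← Finsupp.sum_add]
  congr 1
  funext s c
  apply Finsupp.sum_add_index <;> intros <;> simp [mul_add, Finsupp.single_add]

lemma dR_zero : dR N 0 = 0 := by simp [dR]

lemma dR_single (s : Fin (N + 1) → ℤ) (c : ℂ) :
    dR N (Finsupp.single s c) = Finsupp.single s (c • fun p => (s p : ℂ)) := by
  simp [dR, Finsupp.sum_single_index]

lemma dR_add (f f' : Rring N) : dR N (f + f') = dR N f + dR N f' := by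
  unfold dR
  apply Finsupp.sum_add_index <;> intros <;> simp [add_smul, Finsupp.single_add]

lemma rsmul_single_single (s s' : Fin (N + 1) → ℤ) (c : ℂ) (v : Fin (N + 1) → ℂ) :
    rsmul N (Finsupp.single s c) (Finsupp.single s' v) =
      Finsupp.single (s + s') (c • v) := by
  simp [rsmul, Finsupp.sum_single_index]

lemma rsmul_zero_left (ω : Omega N) : rsmul N 0 ω = 0 := by simp [rsmul]

lemma rsmul_zero_right (f : Rring N) : rsmul N f 0 = 0 := by simp [rsmul]

lemma rsmul_add_left (f f' : Rring N) (ω : Omega N) :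
    rsmul N (f + f') ω = rsmul N f ω + rsmul N f' ω := by
  unfold rsmul
  apply Finsupp.sum_add_index <;> intros <;> simp [Finsupp.sum_add, add_smul,
    Finsupp.single_add]

lemma rsmul_add_right (f : Rring N) (ω ω' : Omega N) :
    rsmul N f (ω + ω') = rsmul N f ω + rsmul N f ω' := by
  unfold rsmul
  rw [← Finsupp.sum_add]
  congr 1
  funext s c
  apply Finsupp.sum_add_index <;> intros <;> simp [smul_add, Finsupp.single_add]

lemma leibniz3 (f₁ f₂ f₃ : Rring N) :
    rsmul N f₃ (dR N (rmul N f₁ f₂)) + rsmul N f₁ (dR N (rmul N f₂ f₃))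
      + rsmul N f₂ (dR N (rmul N f₃ f₁))
    = (2 : ℂ) • dR N (rmul N (rmul N f₁ f₂) f₃) := by
  induction f₁ using Finsupp.induction_linear with
  | zero => simp [rmul_zero_left, rmul_zero_right, dR_zero, rsmul_zero_left,
      rsmul_zero_right]
  | add f f' hf hf' =>
      simp only [rmul_add_left, rmul_add_right, dR_add, rsmul_add_left,
        rsmul_add_right, smul_add] at *
      rw [← hf, ← hf']; abel
  | single s₁ c₁ =>
  induction f₂ using Finsupp.induction_linear with
  | zero => simp [rmul_zero_left, rmul_zero_right, dR_zero, rsmul_zero_left,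
      rsmul_zero_right]
  | add f f' hf hf' =>
      simp only [rmul_add_left, rmul_add_right, dR_add, rsmul_add_left,
        rsmul_add_right, smul_add] at *
      rw [← hf, ← hf']; abel
  | single s₂ c₂ =>
  induction f₃ using Finsupp.induction_linear with
  | zero => simp [rmul_zero_left, rmul_zero_right, dR_zero, rsmul_zero_left,
      rsmul_zero_right]
  | add f f' hf hf' =>
      simp only [rmul_add_left, rmul_add_right, dR_add, rsmul_add_left,
        rsmul_add_right, smul_add] at *
      rw [← hf, ← hf']; abel
  | single s₃ c₃ =>
      rw [rmul_single_single, rmul_single_single, rmul_single_single,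
        rmul_single_single, dR_single, dR_single, dR_single, dR_single,
        rsmul_single_single, rsmul_single_single, rsmul_single_single]
      rw [show s₃ + (s₁ + s₂) = s₁ + s₂ + s₃ by abel,
        show s₁ + (s₂ + s₃) = s₁ + s₂ + s₃ by abel,
        show s₂ + (s₃ + s₁) = s₁ + s₂ + s₃ by abel,
        ← Finsupp.single_add, ← Finsupp.single_add, Finsupp.smul_single]
      congr 1
      funext p
      simp only [Pi.add_apply, Pi.smul_apply, smul_eq_mul]
      push_cast
      ring

end Aux

/-- The bracket
`[f₁g₁ + ω₁, f₂g₂ + ω₂] = f₁f₂[g₁,g₂] + (g₁|g₂) f₂ d(f₁)` on `(R ⊗ ġ) ⊕ K` (with `K`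
central) satisfies the Jacobi identity, using the invariance of the symmetric form on
`ġ`.  On pure tensors the Jacobiator has `R ⊗ ġ`-component
`f₁f₂f₃ ⊗ ([[g₁,g₂],g₃] + [[g₂,g₃],g₁] + [[g₃,g₁],g₂])` and `K`-component
`B([g₁,g₂],g₃) f₃ d(f₁f₂) + B([g₂,g₃],g₁) f₁ d(f₂f₃) + B([g₃,g₁],g₂) f₂ d(f₃f₁)`,
and both vanish (the second one in `K = Ω_R/d(R)`). -/
theorem stmt8 (N : ℕ) (g : Type) [LieRing g] [LieAlgebra ℂ g]
    (B : g →ₗ[ℂ] g →ₗ[ℂ] ℂ)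
    (hsymm : ∀ x y : g, B x y = B y x)
    (hinv : ∀ x y z : g, B ⁅x, y⁆ z = B x ⁅y, z⁆)
    (f₁ f₂ f₃ : Rring N) (g₁ g₂ g₃ : g) :
    (rmul N (rmul N f₁ f₂) f₃) ⊗ₜ[ℂ] (⁅⁅g₁, g₂⁆, g₃⁆ + ⁅⁅g₂, g₃⁆, g₁⁆ + ⁅⁅g₃, g₁⁆, g₂⁆)
        = (0 : Rring N ⊗[ℂ] g) ∧
    (Submodule.Quotient.mk
        (B ⁅g₁, g₂⁆ g₃ • rsmul N f₃ (dR N (rmul N f₁ f₂))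
          + B ⁅g₂, g₃⁆ g₁ • rsmul N f₁ (dR N (rmul N f₂ f₃))
          + B ⁅g₃, g₁⁆ g₂ • rsmul N f₂ (dR N (rmul N f₃ f₁)))
      : Omega N ⧸ exactSub N) = 0 := by
  constructor
  · have h : ⁅⁅g₁, g₂⁆, g₃⁆ + ⁅⁅g₂, g₃⁆, g₁⁆ + ⁅⁅g₃, g₁⁆, g₂⁆ = (0 : g) := by
      rw [← lie_skew ⁅g₁, g₂⁆ g₃, ← lie_skew ⁅g₂, g₃⁆ g₁, ← lie_skew ⁅g₃, g₁⁆ g₂,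
        ← neg_add, ← neg_add, neg_eq_zero,
        show ⁅g₃, ⁅g₁, g₂⁆⁆ + ⁅g₁, ⁅g₂, g₃⁆⁆ + ⁅g₂, ⁅g₃, g₁⁆⁆
            = ⁅g₁, ⁅g₂, g₃⁆⁆ + ⁅g₂, ⁅g₃, g₁⁆⁆ + ⁅g₃, ⁅g₁, g₂⁆⁆ from by abel]
      exact lie_jacobi g₁ g₂ g₃
    rw [h, TensorProduct.tmul_zero]
  · have e₁ : B ⁅g₂, g₃⁆ g₁ = B ⁅g₁, g₂⁆ g₃ := by rw [hsymm, hinv]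
    have e₂ : B ⁅g₃, g₁⁆ g₂ = B ⁅g₁, g₂⁆ g₃ := by rw [hinv, hsymm]
    rw [e₁, e₂, ← smul_add, ← smul_add, leibniz3]
    rw [Submodule.Quotient.mk_eq_zero]
    exact Submodule.smul_mem _ _ (Submodule.smul_mem _ _
      (Submodule.subset_span ⟨_, rfl⟩))
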